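/- Assume q ≠ 1. Then the following are equivalent: (a) c_S ≥ 6 c_F; (b) for every n ∈ ℕ, every wetting configuration D^w_n ⊂ ∂L_{FS} with #D^w_n = n satisfies both (i) V_n(D^w_n) = min{V_n(D) : D ∈ C_n} and (ii) V_n(D^w_n) < V_n(D_n) for every D_n ∈ C_n with D_n \ ∂L_{FS} ≠ ∅. -/

import Mathlib

open scoped BigOperators Classical Topology ENNReal
open Filter MeasureTheory

noncomputable section

/-!
Common setting: film lattice `L_F` with parameter `e_F = 1`, substrate spacing
`e_S = q/p` (`p, q` coprime positive integers), Heitmann–Radin potentials and the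
configurational energy `V_n` (with values in `EReal`, since the Heitmann–Radin
potential takes the value `+∞` below distance `1`).
-/

/-- Points of the plane. -/
abbrev Pt : Type := ℝ × ℝ

/-- The lattice vector `t₁ = (1,0)`. -/
def t1 : Pt := ((1 : ℝ), (0 : ℝ))

/-- The lattice vector `t₂ = (1/2, √3/2)`. -/
def t2 : Pt := ((1 / 2 : ℝ), Real.sqrt 3 / 2)

/-- Euclidean distance on `ℝ × ℝ`. -/
def dE (x y : Pt) : ℝ := Real.sqrt ((x.1 - y.1) ^ 2 + (x.2 - y.2) ^ 2)

/-- Substrate lattice spacing `e_S = q / p`. -/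
def eS (p q : ℕ) : ℝ := (q : ℝ) / (p : ℝ)

/-- The film lattice `L_F = {(0, e_S) + k₁ t₁ + k₂ t₂ : k₁ ∈ ℤ, k₂ ∈ ℕ ∪ {0}}`. -/
def LF (p q : ℕ) : Set Pt :=
  {x | ∃ (k₁ : ℤ) (k₂ : ℕ), x = (((0 : ℝ), eS p q) : Pt) + (k₁ : ℝ) • t1 + (k₂ : ℝ) • t2}

/-- The set `∂L_{FS} = {(k q, e_S) : k ∈ ℤ}` of lower-boundary film sites lying at
distance `e_S` above a substrate atom. -/
def bLFS (p q : ℕ) : Set Pt := {x | ∃ k : ℤ, x = (((k : ℝ) * (q : ℝ), eS p q) : Pt)}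

/-- Crystalline configurations with `n` atoms: subsets of `L_F` of cardinality `n`. -/
def Cn (p q n : ℕ) : Set (Finset Pt) := {D | ↑D ⊆ LF p q ∧ D.card = n}

/-- The Heitmann–Radin sticky-disc potential: `+∞` for `r < 1`, `-c_F` at `r = 1`,
`0` for `r > 1`. -/
def vF (cF : ℝ) (r : ℝ) : EReal :=
  if r < 1 then (⊤ : EReal) else if r = 1 then ((-cF : ℝ) : EReal) else (0 : EReal)

/-- The one-body substrate potential `v¹`: `-c_S` on `∂L_{FS}`, `0` otherwise. -/
def v1 (cS : ℝ) (p q : ℕ) (x : Pt) : ℝ := if x ∈ bLFS p q then -cS else 0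

/-- The total energy `V_n(D) = Σ_{(x,y) ∈ D×D, x ≠ y} v_F(|x-y|) + Σ_{x ∈ D} v¹(x)`. -/
def Vn (cF cS : ℝ) (p q : ℕ) (D : Finset Pt) : EReal :=
  (∑ e ∈ D.offDiag, vF cF (dE e.1 e.2)) + (((∑ x ∈ D, v1 cS p q x) : ℝ) : EReal)

/-- The dewetting condition: `c_S < 4c_F` if `q = 1` and `c_S < 6c_F` if `q ≠ 1`. -/
def Dewetting (cF cS : ℝ) (q : ℕ) : Prop := if q = 1 then cS < 4 * cF else cS < 6 * cF

/-- The boundary `∂D` of a configuration: atoms with fewer than `6` film neighbours. -/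
def bdry (D : Finset Pt) : Finset Pt :=
  D.filter fun x => (D.filter fun y => dE x y = 1).card < 6

/-- The empirical measure `μ_{D_n} = (1/n) Σ_{x ∈ D_n} δ_{x/√n}`. -/
def emp (n : ℕ) (D : Finset Pt) : Measure Pt :=
  ((n : ℝ≥0∞))⁻¹ • ∑ x ∈ D, Measure.dirac (((Real.sqrt n)⁻¹ : ℝ) • x)

/-- A configuration of `n` consecutive sites `{w, w + t₁, …, w + (n-1) t₁}` on `∂L_{FS}`. -/
def IsConsecutive (p q n : ℕ) (Dw : Finset Pt) : Prop :=
  ∃ w : Pt, w ∈ bLFS p q ∧ Dw = (Finset.range n).image fun i => w + (i : ℝ) • t1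

/-- Two atoms joined by a chain of atoms of `D` with consecutive distances `1`. -/
def chainConn (D : Finset Pt) (x y : Pt) : Prop :=
  Relation.ReflTransGen (fun a b => a ∈ D ∧ b ∈ D ∧ dE a b = 1) x y

/-- Connectedness of a configuration. -/
def IsConnectedConf (D : Finset Pt) : Prop := ∀ x ∈ D, ∀ y ∈ D, chainConn D x y

/-- `C` is a connected component of `D` (the set of atoms of `D` chain-connected to
some atom of `D`). -/
def IsComponent (D C : Finset Pt) : Prop :=
  ∃ x ∈ D, ∀ y : Pt, y ∈ C ↔ y ∈ D ∧ chainConn D x y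

/-- Almost-connectedness: connected if `q = 1`; if `q ≠ 1`, the connected components
can be enumerated so that each one is at distance at most `q` from the union of the
previous ones. -/
def AlmostConnected (q : ℕ) (D : Finset Pt) : Prop :=
  if q = 1 then IsConnectedConf D
  else
    ∃ (k : ℕ) (f : Fin k → Finset Pt),
      Function.Injective f ∧
      (∀ i, IsComponent D (f i)) ∧
      (∀ C : Finset Pt, IsComponent D C → ∃ i, C = f i) ∧
      (∀ i : Fin k, 1 ≤ (i : ℕ) →
        ∃ x ∈ f i, ∃ j : Fin k, j < i ∧ ∃ y ∈ f j, dE x y ≤ (q : ℝ))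

/-- Local energy `E_loc(x)` of a site with respect to the configuration `D`. -/
def Eloc (cF : ℝ) (D : Finset Pt) (x : Pt) : ℝ :=
  if x ∈ D then cF * (6 - ((D.filter fun y => dE x y = 1).card : ℝ)) else 0

/-- Height `y_M` of the topmost atom of `D` in the column of `x`. -/
def yM (D : Finset Pt) (x : Pt) : ℝ := sSup {y : ℝ | ((x.1, y) : Pt) ∈ D}

/-- The strip top `x̃ = (x¹, y_M)`. -/
def til (D : Finset Pt) (x : Pt) : Pt := (x.1, yM D x)

/-- The weight `w₊(x̃)`. -/
def wPlus (p q : ℕ) (D : Finset Pt) (x : Pt) : ℝ :=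
  if x + t1 ∈ D ∧ x + t1 ∈ bLFS p q ∧ til D x + t2 = til D (x + t1) + t2 - t1 then 1 / 2 else 1

/-- The weight `w₋(x̃)`. -/
def wMinus (p q : ℕ) (D : Finset Pt) (x : Pt) : ℝ :=
  if x - t1 ∈ D ∧ x - t1 ∈ bLFS p q ∧ til D x + t2 - t1 = til D (x - t1) + t2 then 1 / 2 else 1

/-- Lower strip energy `E_strip,below(x)`. -/
def EStripBelow (cF cS : ℝ) (p q : ℕ) (D : Finset Pt) (x : Pt) : ℝ :=
  if q = 1 then
    (1 / 2) * Eloc cF D x + (1 / 4) * Eloc cF D (x + t1) + (1 / 4) * Eloc cF D (x - t1) - cS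
  else
    Eloc cF D x + (1 / 2) * Eloc cF D (x + t1) + (1 / 2) * Eloc cF D (x - t1) - cS

/-- Upper strip energy `E_strip,above(x)`. -/
def EStripAbove (cF : ℝ) (p q : ℕ) (D : Finset Pt) (x : Pt) : ℝ :=
  (if til D x ≠ x then Eloc cF D (til D x) else 0) +
    wPlus p q D x * Eloc cF D (til D x + t2) +
    wMinus p q D x * Eloc cF D (til D x + t2 - t1)

/-- The strip energy `E_strip(x) = E_strip,below(x) + E_strip,above(x)`. -/
def EStrip (cF cS : ℝ) (p q : ℕ) (D : Finset Pt) (x : Pt) : ℝ :=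
  EStripBelow cF cS p q D x + EStripAbove cF p q D x

/-- `Δ_strip`: `4c_F - c_S` if `q = 1`, `6c_F - c_S` if `q ≠ 1`. -/
def DeltaStrip (cF cS : ℝ) (q : ℕ) : ℝ := if q = 1 then 4 * cF - cS else 6 * cF - cS

/-- The union `S(∂L_{FS})` of all strips of the configuration `D`. -/
def SLFS (p q : ℕ) (D : Finset Pt) : Finset Pt :=
  D.filter fun y => ∃ x, x ∈ D ∧ x ∈ bLFS p q ∧
    (y = x ∨ y = x + t1 ∨ y = x - t1 ∨ y = til D x ∨ y = til D x + t2 ∨ y = til D x + t2 - t1)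

/-- The rescaled energy `E_n(μ_{D_n}) = n^{-1/2} (V_n(D_n) + 6 c_F n)`. -/
def En (cF cS : ℝ) (p q n : ℕ) (D : Finset Pt) : EReal :=
  ((((Real.sqrt n)⁻¹ : ℝ)) : EReal) * (Vn cF cS p q D + ((6 * cF * (n : ℝ) : ℝ) : EReal))

namespace WetDev

/-- coordinates map -/
def phi (p q : ℕ) (v : ℤ × ℤ) : Pt :=
  ((v.1 : ℝ) + (v.2 : ℝ) / 2, eS p q + (v.2 : ℝ) * (Real.sqrt 3 / 2))

lemma sqrt3_pos : (0:ℝ) < Real.sqrt 3 := Real.sqrt_pos.2 (by norm_num)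

lemma phi_injective (p q : ℕ) : Function.Injective (phi p q) := by
  rintro ⟨a, b⟩ ⟨c, d⟩ h
  simp only [phi, Prod.mk.injEq] at h
  obtain ⟨h1, h2⟩ := h
  have hbd : (b : ℝ) = d := by
    have hne : (Real.sqrt 3 / 2) ≠ 0 := by positivity
    exact mul_right_cancel₀ hne (by linarith)
  have hb : b = d := by exact_mod_cast hbd
  have ha : a = c := by
    have : (a : ℝ) = c := by rw [hbd] at h1; linarith
    exact_mod_cast this
  simp [ha, hb]

lemma mem_LF_iff (p q : ℕ) (x : Pt) :
    x ∈ LF p q ↔ ∃ v : ℤ × ℤ, 0 ≤ v.2 ∧ x = phi p q v := by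
  constructor
  · rintro ⟨k₁, k₂, rfl⟩
    refine ⟨(k₁, (k₂ : ℤ)), by positivity, ?_⟩
    simp [phi, t1, t2, Prod.ext_iff]
    constructor <;> push_cast <;> ring
  · rintro ⟨⟨a, b⟩, hb, rfl⟩
    refine ⟨a, b.toNat, ?_⟩
    simp only at hb
    have hb' : ((b.toNat : ℕ) : ℝ) = ((b : ℤ) : ℝ) := by
      exact_mod_cast congrArg (Int.cast : ℤ → ℝ) (Int.toNat_of_nonneg hb)
    simp [phi, t1, t2, Prod.ext_iff, hb']
    ring

lemma phi_mem_LF (p q : ℕ) (v : ℤ × ℤ) (hv : 0 ≤ v.2) : phi p q v ∈ LF p q :=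
  (mem_LF_iff p q _).2 ⟨v, hv, rfl⟩

lemma mem_bLFS_phi (p q : ℕ) (hq : 0 < q) (v : ℤ × ℤ) :
    phi p q v ∈ bLFS p q ↔ v.2 = 0 ∧ (q : ℤ) ∣ v.1 := by
  constructor
  · rintro ⟨k, hk⟩
    simp only [phi, Prod.mk.injEq] at hk
    obtain ⟨h1, h2⟩ := hk
    have hb : (v.2 : ℝ) = 0 := by
      have h3 := sqrt3_pos
      nlinarith
    have hb2 : v.2 = 0 := by exact_mod_cast hb
    refine ⟨hb2, ⟨k, ?_⟩⟩
    have : (v.1 : ℝ) = (k : ℝ) * (q : ℝ) := by rw [hb] at h1; linarith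
    have h5 : v.1 = k * (q : ℤ) := by exact_mod_cast this
    rw [h5, mul_comm]
  · rintro ⟨hb, k, hk⟩
    refine ⟨k, ?_⟩
    simp [phi, hb, hk, Prod.ext_iff]
    push_cast
    ring

/-- the integer quadratic form -/
def Qf (w : ℤ × ℤ) : ℤ := w.1 ^ 2 + w.1 * w.2 + w.2 ^ 2

lemma Qf_pos (w : ℤ × ℤ) (hw : w ≠ 0) : 1 ≤ Qf w := by
  rcases w with ⟨a, b⟩
  have h : a ≠ 0 ∨ b ≠ 0 := by
    by_contra h; push_neg at h; exact hw (by simp [Prod.ext_iff, h.1, h.2])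
  have h4 : 4 * Qf (a, b) = (2 * a + b) ^ 2 + 3 * b ^ 2 := by simp [Qf]; ring
  have hpos : 0 < 4 * Qf (a, b) := by
    rw [h4]
    rcases h with h | h
    · rcases eq_or_ne b 0 with rfl | hb
      · simp; positivity
      · nlinarith [sq_nonneg (2 * a + b), sq_nonneg b, Int.one_le_abs hb, sq_abs b]
    · nlinarith [sq_nonneg (2 * a + b), Int.one_le_abs h, sq_abs b]
  omega

def dirs6 : Finset (ℤ × ℤ) := {(1, 0), (-1, 0), (0, 1), (0, -1), (1, -1), (-1, 1)}

lemma Qf_eq_one_iff (w : ℤ × ℤ) : Qf w = 1 ↔ w ∈ dirs6 := by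
  rcases w with ⟨a, b⟩
  constructor
  · intro h
    have h4 : (2 * a + b) ^ 2 + 3 * b ^ 2 = 4 := by simp [Qf] at h; nlinarith
    have hb1 : -1 ≤ b := by nlinarith [sq_nonneg (2 * a + b)]
    have hb2 : b ≤ 1 := by nlinarith [sq_nonneg (2 * a + b)]
    have ha1 : -1 ≤ a := by nlinarith [sq_nonneg (a - 1), sq_nonneg (a + b)]
    have ha2 : a ≤ 1 := by nlinarith [sq_nonneg (a + 1), sq_nonneg (a + b)]
    simp only [dirs6, Finset.mem_insert, Finset.mem_singleton, Prod.mk.injEq]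
    interval_cases a <;> interval_cases b <;> simp_all [Qf] <;> omega
  · intro h
    fin_cases h <;> decide

lemma dE_phi_sq (p q : ℕ) (u v : ℤ × ℤ) :
    (phi p q u).1 - (phi p q v).1 = ((u.1 - v.1 : ℤ) : ℝ) + ((u.2 - v.2 : ℤ) : ℝ) / 2 ∧
    (phi p q u).2 - (phi p q v).2 = ((u.2 - v.2 : ℤ) : ℝ) * (Real.sqrt 3 / 2) := by
  simp [phi]; constructor <;> push_cast <;> ring

lemma dE_phi (p q : ℕ) (u v : ℤ × ℤ) :
    dE (phi p q u) (phi p q v) = Real.sqrt ((Qf (u - v) : ℝ)) := by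
  obtain ⟨h1, h2⟩ := dE_phi_sq p q u v
  rw [dE, h1, h2]
  congr 1
  have h3 : Real.sqrt 3 ^ 2 = 3 := Real.sq_sqrt (by norm_num)
  simp only [Qf, Prod.fst_sub, Prod.snd_sub]
  push_cast
  nlinarith [h3]

lemma one_le_dE_phi (p q : ℕ) (u v : ℤ × ℤ) (huv : u ≠ v) :
    1 ≤ dE (phi p q u) (phi p q v) := by
  rw [dE_phi]
  have h1 : (1 : ℝ) ≤ (Qf (u - v) : ℝ) := by
    exact_mod_cast Qf_pos (u - v) (sub_ne_zero.2 huv)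
  nlinarith [Real.sq_sqrt (by linarith : (0:ℝ) ≤ (Qf (u-v) : ℝ)), Real.sqrt_nonneg ((Qf (u-v) : ℝ))]

lemma dE_phi_eq_one_iff (p q : ℕ) (u v : ℤ × ℤ) :
    dE (phi p q u) (phi p q v) = 1 ↔ Qf (u - v) = 1 := by
  rw [dE_phi, Real.sqrt_eq_one]
  exact_mod_cast Iff.rfl

/-- EReal coercion as an AddMonoidHom -/
def coeHomE : ℝ →+ EReal := ⟨⟨(fun x => (x : EReal)), EReal.coe_zero⟩, fun x y => EReal.coe_add x y⟩

/-- number of ordered bonded pairs, in coordinates -/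
def Pcnt (K : Finset (ℤ × ℤ)) : ℕ := ((K.offDiag).filter fun e => Qf (e.1 - e.2) = 1).card

/-- number of atoms over the substrate pattern, in coordinates -/
def mcnt (q : ℕ) (K : Finset (ℤ × ℤ)) : ℕ :=
  (K.filter fun v => v.2 = 0 ∧ (q : ℤ) ∣ v.1).card

lemma energy_formula (cF cS : ℝ) (p q : ℕ) (hq : 0 < q) (K : Finset (ℤ × ℤ)) :
    Vn cF cS p q (K.image (phi p q)) =
      (((-cF) * (Pcnt K) + (-cS) * (mcnt q K) : ℝ) : EReal) := by
  have hinj := phi_injective p q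
  have hoff : (K.image (phi p q)).offDiag =
      K.offDiag.image (Prod.map (phi p q) (phi p q)) := by
    ext e
    constructor
    · intro he
      rw [Finset.mem_offDiag] at he
      obtain ⟨h1, h2, hne⟩ := he
      obtain ⟨u, hu, hux⟩ := Finset.mem_image.1 h1
      obtain ⟨v, hv, hvy⟩ := Finset.mem_image.1 h2
      refine Finset.mem_image.2 ⟨(u, v), Finset.mem_offDiag.2 ⟨hu, hv, ?_⟩, ?_⟩
      · intro h
        rw [show (u, v).1 = u from rfl, show (u, v).2 = v from rfl] at h
        subst h
        exact hne (by rw [← hux, ← hvy])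
      · have : e = (e.1, e.2) := rfl
        rw [this, ← hux, ← hvy]; rfl
    · intro he
      obtain ⟨⟨u, v⟩, huv, heq⟩ := Finset.mem_image.1 he
      rw [Finset.mem_offDiag] at huv
      subst heq
      refine Finset.mem_offDiag.2 ⟨Finset.mem_image_of_mem _ huv.1,
        Finset.mem_image_of_mem _ huv.2.1, fun h => huv.2.2 ?_⟩
      have : phi p q u = phi p q v := h
      exact Prod.ext_iff.2 ⟨congrArg Prod.fst (hinj this ▸ rfl), congrArg Prod.snd (hinj this ▸ rfl)⟩
  have hmapinj : Function.Injective (Prod.map (phi p q) (phi p q)) :=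
    Function.Injective.prodMap hinj hinj
  have hsum1 : (∑ e ∈ (K.image (phi p q)).offDiag, vF cF (dE e.1 e.2)) =
      ∑ e ∈ K.offDiag, vF cF (dE (phi p q e.1) (phi p q e.2)) := by
    rw [hoff, Finset.sum_image (fun a _ b _ h => hmapinj h)]
    exact Finset.sum_congr rfl (fun e _ => by rw [Prod.map_fst, Prod.map_snd])
  have hterm : ∀ e ∈ K.offDiag, vF cF (dE (phi p q e.1) (phi p q e.2)) =
      coeHomE (if Qf (e.1 - e.2) = 1 then -cF else 0) := by
    rintro ⟨u, v⟩ he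
    simp only [Finset.mem_offDiag] at he
    have hne : u ≠ v := he.2.2
    have h1 := one_le_dE_phi p q u v hne
    rw [vF, if_neg (by linarith)]
    by_cases hq1 : Qf (u - v) = 1
    · rw [if_pos ((dE_phi_eq_one_iff p q u v).2 hq1), if_pos hq1]; rfl
    · rw [if_neg (fun h => hq1 ((dE_phi_eq_one_iff p q u v).1 h)), if_neg hq1]
      simp [coeHomE]
  have hsum2 : (∑ e ∈ K.offDiag, vF cF (dE (phi p q e.1) (phi p q e.2))) =
      coeHomE (∑ e ∈ K.offDiag, if Qf (e.1 - e.2) = 1 then -cF else 0) := by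
    rw [Finset.sum_congr rfl hterm, map_sum]
  have hsum3 : (∑ e ∈ K.offDiag, if Qf (e.1 - e.2) = 1 then (-cF) else 0) =
      (-cF) * (Pcnt K) := by
    rw [← Finset.sum_filter, Finset.sum_const, Pcnt]
    simp [mul_comm]
  have hv1 : (∑ x ∈ K.image (phi p q), v1 cS p q x) = (-cS) * (mcnt q K) := by
    rw [Finset.sum_image (fun a _ b _ h => hinj h)]
    have : ∀ v ∈ K, v1 cS p q (phi p q v) =
        if (v.2 = 0 ∧ (q : ℤ) ∣ v.1) then -cS else 0 := by
      intro v _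
      rw [v1]
      by_cases h : phi p q v ∈ bLFS p q
      · rw [if_pos h, if_pos ((mem_bLFS_phi p q hq v).1 h)]
      · rw [if_neg h, if_neg (fun h' => h ((mem_bLFS_phi p q hq v).2 h'))]
    rw [Finset.sum_congr rfl this, ← Finset.sum_filter, Finset.sum_const, mcnt]
    simp [mul_comm]
  rw [Vn, hsum1, hsum2, hsum3, hv1]
  rfl

/-- count of missing-neighbour atoms in direction `d` -/
def Ncnt (K : Finset (ℤ × ℤ)) (d : ℤ × ℤ) : ℕ := (K.filter fun v => v - d ∉ K).card

lemma Acnt_add_Ncnt (K : Finset (ℤ × ℤ)) (d : ℤ × ℤ) :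
    (K.filter fun v => v + d ∈ K).card + Ncnt K d = K.card := by
  have h1 : (K.filter fun v => v + d ∈ K).card = (K.filter fun v => v - d ∈ K).card := by
    apply Finset.card_nbij (fun v => v + d)
    · intro a ha
      simp only [Finset.mem_coe, Finset.mem_filter] at ha ⊢
      exact ⟨ha.2, by simpa using ha.1⟩
    · intro a _ b _ h
      simpa using h
    · intro b hb
      simp only [Finset.coe_filter, Set.mem_setOf_eq, Set.mem_image] at hb ⊢
      exact ⟨b - d, ⟨hb.2, by simpa using hb.1⟩, by simp⟩
  rw [h1, Ncnt]
  exact Finset.card_filter_add_card_filter_not _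

lemma Ncnt_neg (K : Finset (ℤ × ℤ)) (d : ℤ × ℤ) : Ncnt K (-d) = Ncnt K d := by
  have h1 := Acnt_add_Ncnt K d
  have h2 : (K.filter fun v => v + d ∈ K).card + Ncnt K (-d) = K.card := by
    rw [Ncnt]
    have : (K.filter fun v => v - -d ∉ K) = (K.filter fun v => ¬ (v + d ∈ K)) := by
      apply Finset.filter_congr; intro v _; rw [sub_neg_eq_add]
    rw [this]
    exact Finset.card_filter_add_card_filter_not _
  omega

def d1 : ℤ × ℤ := (1, 0)
def d2 : ℤ × ℤ := (0, 1)
def d3 : ℤ × ℤ := (-1, 1)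

lemma fiber_card (K : Finset (ℤ × ℤ)) (d : ℤ × ℤ) (hdq : Qf d = 1) :
    (((K.offDiag).filter fun e => Qf (e.1 - e.2) = 1).filter fun e => e.1 - e.2 = d).card
      = (K.filter fun v => v + d ∈ K).card := by
  have hd : d ≠ 0 := by rintro rfl; simp [Qf] at hdq
  apply Finset.card_nbij (fun e => e.2)
  · intro e he
    simp only [Finset.mem_coe, Finset.mem_filter, Finset.mem_offDiag] at he ⊢
    obtain ⟨⟨⟨h1, h2, _⟩, _⟩, hd'⟩ := he
    refine ⟨h2, ?_⟩
    have : e.1 = e.2 + d := by rw [← hd']; ring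
    rwa [← this]
  · intro a ha b hb h
    simp only [Finset.coe_filter, Set.mem_setOf_eq, Finset.mem_offDiag] at ha hb
    have ha' : a.1 = a.2 + d := by rw [← ha.2]; ring
    have hb' : b.1 = b.2 + d := by rw [← hb.2]; ring
    have h2 : a.2 = b.2 := h
    have : a.1 = b.1 := by rw [ha', hb', h2]
    exact Prod.ext_iff.2 ⟨this, h2⟩
  · intro v hv
    simp only [Finset.coe_filter, Set.mem_setOf_eq] at hv
    refine ⟨(v + d, v), Finset.mem_coe.2 (Finset.mem_filter.2 ⟨Finset.mem_filter.2
      ⟨Finset.mem_offDiag.2 ⟨hv.2, hv.1, ?_⟩, ?_⟩, by simp⟩), rfl⟩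
    · intro h
      apply hd
      have h' : v + d = v := h
      have : v + d - v = 0 := by rw [h']; ring
      simpa using this
    · show Qf ((v + d, v).1 - (v + d, v).2) = 1
      rwa [show (v + d, v).1 - (v + d, v).2 = d from by simp]


lemma decomp (K : Finset (ℤ × ℤ)) :
    Pcnt K + 2 * (Ncnt K d1 + Ncnt K d2 + Ncnt K d3) = 6 * K.card := by
  classical
  set S := (K.offDiag).filter fun e => Qf (e.1 - e.2) = 1 with hS
  have hmap : ∀ e ∈ S, e.1 - e.2 ∈ dirs6 := by
    intro e he
    rw [hS, Finset.mem_filter] at he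
    exact (Qf_eq_one_iff _).1 he.2
  have hP : Pcnt K = ∑ d ∈ dirs6, (S.filter fun e => e.1 - e.2 = d).card :=
    Finset.card_eq_sum_card_fiberwise hmap
  have hexp : ∑ d ∈ dirs6, (S.filter fun e => e.1 - e.2 = d).card =
      (S.filter fun e => e.1 - e.2 = ((1:ℤ), (0:ℤ))).card +
      ((S.filter fun e => e.1 - e.2 = ((-1:ℤ), (0:ℤ))).card +
      ((S.filter fun e => e.1 - e.2 = ((0:ℤ), (1:ℤ))).card +
      ((S.filter fun e => e.1 - e.2 = ((0:ℤ), (-1:ℤ))).card +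
      ((S.filter fun e => e.1 - e.2 = ((1:ℤ), (-1:ℤ))).card +
      (S.filter fun e => e.1 - e.2 = ((-1:ℤ), (1:ℤ))).card)))) := by
    simp only [dirs6]
    rw [Finset.sum_insert (by decide), Finset.sum_insert (by decide),
      Finset.sum_insert (by decide), Finset.sum_insert (by decide),
      Finset.sum_insert (by decide), Finset.sum_singleton]
  have f1 := fiber_card K ((1:ℤ), (0:ℤ)) (by decide)
  have f2 := fiber_card K ((-1:ℤ), (0:ℤ)) (by decide)
  have f3 := fiber_card K ((0:ℤ), (1:ℤ)) (by decide)
  have f4 := fiber_card K ((0:ℤ), (-1:ℤ)) (by decide)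
  have f5 := fiber_card K ((1:ℤ), (-1:ℤ)) (by decide)
  have f6 := fiber_card K ((-1:ℤ), (1:ℤ)) (by decide)
  rw [← hS] at f1 f2 f3 f4 f5 f6
  have a1 := Acnt_add_Ncnt K ((1:ℤ), (0:ℤ))
  have a2 := Acnt_add_Ncnt K ((-1:ℤ), (0:ℤ))
  have a3 := Acnt_add_Ncnt K ((0:ℤ), (1:ℤ))
  have a4 := Acnt_add_Ncnt K ((0:ℤ), (-1:ℤ))
  have a5 := Acnt_add_Ncnt K ((1:ℤ), (-1:ℤ))
  have a6 := Acnt_add_Ncnt K ((-1:ℤ), (1:ℤ))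
  have n1 : Ncnt K ((-1:ℤ), (0:ℤ)) = Ncnt K d1 := by
    rw [show ((-1:ℤ), (0:ℤ)) = -d1 from by decide]; exact Ncnt_neg K d1
  have n2 : Ncnt K ((0:ℤ), (-1:ℤ)) = Ncnt K d2 := by
    rw [show ((0:ℤ), (-1:ℤ)) = -d2 from by decide]; exact Ncnt_neg K d2
  have n3 : Ncnt K ((1:ℤ), (-1:ℤ)) = Ncnt K d3 := by
    rw [show ((1:ℤ), (-1:ℤ)) = -d3 from by decide]; exact Ncnt_neg K d3
  have hd1 : Ncnt K ((1:ℤ), (0:ℤ)) = Ncnt K d1 := rfl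
  have hd2 : Ncnt K ((0:ℤ), (1:ℤ)) = Ncnt K d2 := rfl
  have hd3 : Ncnt K ((-1:ℤ), (1:ℤ)) = Ncnt K d3 := rfl
  rw [hP, hexp, f1, f2, f3, f4, f5, f6]
  omega

lemma sub_d1 (v : ℤ × ℤ) : v - d1 = (v.1 - 1, v.2) := by
  simp [d1, Prod.ext_iff]
lemma sub_d2 (v : ℤ × ℤ) : v - d2 = (v.1, v.2 - 1) := by
  simp [d2, Prod.ext_iff]
lemma sub_d3 (v : ℤ × ℤ) : v - d3 = (v.1 + 1, v.2 - 1) := by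
  simp [d3, Prod.ext_iff]

lemma key (q : ℕ) (hq2 : 2 ≤ q) (K : Finset (ℤ × ℤ)) (hK : ∀ v ∈ K, 0 ≤ v.2) :
    3 * mcnt q K ≤ Ncnt K d1 + Ncnt K d2 + Ncnt K d3 ∧
    ((∃ v ∈ K, ¬(v.2 = 0 ∧ (q : ℤ) ∣ v.1)) →
      3 * mcnt q K + 1 ≤ Ncnt K d1 + Ncnt K d2 + Ncnt K d3) := by
  classical
  set Bm := K.filter (fun v => v.2 = 0) with hBm
  set M := K.filter (fun v => v.2 = 0 ∧ (q : ℤ) ∣ v.1) with hM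
  set LE := K.filter (fun v => v.2 = 0 ∧ (v.1 - 1, v.2) ∉ K) with hLE
  have hMBm : M ⊆ Bm := by
    intro v hv
    rw [hM, Finset.mem_filter] at hv
    rw [hBm, Finset.mem_filter]
    exact ⟨hv.1, hv.2.1⟩
  have hmr : M.card ≤ Bm.card := Finset.card_le_card hMBm
  have hr2 : Bm.card ≤ Ncnt K d2 := by
    apply Finset.card_le_card
    intro v hv
    rw [hBm, Finset.mem_filter] at hv
    simp only [Finset.mem_filter]
    rw [sub_d2 v]
    refine ⟨hv.1, fun h => ?_⟩
    have := hK _ h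
    simp only [hv.2] at this
    omega
  have hr3 : Bm.card ≤ Ncnt K d3 := by
    apply Finset.card_le_card
    intro v hv
    rw [hBm, Finset.mem_filter] at hv
    simp only [Finset.mem_filter]
    rw [sub_d3 v]
    refine ⟨hv.1, fun h => ?_⟩
    have := hK _ h
    simp only [hv.2] at this
    omega
  have hρ : LE.card ≤ Ncnt K d1 := by
    apply Finset.card_le_card
    intro v hv
    rw [hLE, Finset.mem_filter] at hv
    simp only [Finset.mem_filter]
    rw [sub_d1 v]
    exact ⟨hv.1, hv.2.2⟩
  -- the injection: 2 * M.card ≤ LE.card + Bm.card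
  have hinj : M.card ≤ LE.card + (Bm.card - M.card) := by
    have h1 : M.card ≤ (LE ∪ (Bm \ M)).card := by
      apply Finset.card_le_card_of_injOn
        (fun v => if (v.1 - 1, v.2) ∈ K then (v.1 - 1, v.2) else v)
      · intro v hv
        rw [hM, Finset.mem_coe, Finset.mem_filter] at hv
        simp only [Finset.mem_coe]
        obtain ⟨hvK, hv0, hdvd⟩ := hv
        by_cases h : (v.1 - 1, v.2) ∈ K
        · rw [if_pos h]
          apply Finset.mem_union_right
          rw [Finset.mem_sdiff, hBm, hM, Finset.mem_filter, Finset.mem_filter]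
          refine ⟨⟨h, hv0⟩, fun hc => ?_⟩
          have hd2 : (q : ℤ) ∣ v.1 - 1 := hc.2.2
          have : (q : ℤ) ∣ 1 := by
            have := dvd_sub hdvd hd2
            simpa using this
          have := Int.le_of_dvd one_pos this
          have : (2 : ℤ) ≤ (q : ℤ) := by exact_mod_cast hq2
          omega
        · rw [if_neg h]
          apply Finset.mem_union_left
          rw [hLE, Finset.mem_filter]
          exact ⟨hvK, hv0, h⟩
      · intro u hu v hv huv
        simp only [Finset.mem_coe] at hu hv
        rw [hM, Finset.mem_filter] at hu hv
        obtain ⟨huK, hu0, hud⟩ := hu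
        obtain ⟨hvK, hv0, hvd⟩ := hv
        by_contra hne
        have h1ne : u.1 ≠ v.1 := by
          intro h
          exact hne (Prod.ext_iff.2 ⟨h, by rw [hu0, hv0]⟩)
        have hdvd : (q : ℤ) ∣ u.1 - v.1 := dvd_sub hud hvd
        have habs : (q : ℤ) ≤ |u.1 - v.1| := by
          apply Int.le_of_dvd (abs_pos.2 (sub_ne_zero.2 h1ne))
          exact (dvd_abs _ _).2 hdvd
        have hq2' : (2 : ℤ) ≤ (q : ℤ) := by exact_mod_cast hq2
        have hcases : u.1 - v.1 ≥ 2 ∨ v.1 - u.1 ≥ 2 := by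
          rcases le_or_gt 0 (u.1 - v.1) with h | h
          · left; rw [abs_of_nonneg h] at habs; omega
          · right; rw [abs_of_neg h] at habs; omega
        have this2 : (if (u.1 - 1, u.2) ∈ K then (u.1 - 1, u.2) else u) =
            (if (v.1 - 1, v.2) ∈ K then (v.1 - 1, v.2) else v) := huv
        have hfst := congrArg Prod.fst this2
        rw [apply_ite Prod.fst, apply_ite Prod.fst] at hfst
        simp only [Prod.fst] at hfst
        split_ifs at hfst <;> omega
    have h2 : (LE ∪ (Bm \ M)).card ≤ LE.card + (Bm \ M).card := Finset.card_union_le _ _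
    have h3 : (Bm \ M).card = Bm.card - M.card := Finset.card_sdiff_of_subset hMBm
    omega
  have hmeq : M.card = mcnt q K := rfl
  refine ⟨by omega, ?_⟩
  rintro ⟨v, hvK, hv⟩
  by_cases hv2 : v.2 = 0
  · -- v is a bottom atom not over the pattern : M ⊊ Bm
    have hvBm : v ∈ Bm := by rw [hBm, Finset.mem_filter]; exact ⟨hvK, hv2⟩
    have hvM : v ∉ M := by
      rw [hM, Finset.mem_filter]
      rintro ⟨_, h⟩
      exact hv h
    have : M.card < Bm.card := Finset.card_lt_card ⟨hMBm, fun hc => hvM (hc hvBm)⟩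
    omega
  · -- v is an upper atom: find a left end in its row
    have hne : (K.filter (fun w => w.2 = v.2)).Nonempty :=
      ⟨v, Finset.mem_filter.2 ⟨hvK, rfl⟩⟩
    obtain ⟨u, hu, humin⟩ := Finset.exists_min_image _ (fun w => w.1) hne
    rw [Finset.mem_filter] at hu
    have huK := hu.1
    have hu2 := hu.2
    have huLE : u ∉ LE := by
      rw [hLE, Finset.mem_filter]
      rintro ⟨_, h0, _⟩
      rw [hu2] at h0
      exact hv2 h0
    have huN : u ∈ K.filter (fun w => w - d1 ∉ K) := by
      rw [Finset.mem_filter, sub_d1]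
      refine ⟨huK, fun h => ?_⟩
      have := humin _ (Finset.mem_filter.2 ⟨h, hu2⟩)
      simp only at this
      omega
    have hins : insert u LE ⊆ K.filter (fun w => w - d1 ∉ K) := by
      intro w hw
      rcases Finset.mem_insert.1 hw with rfl | hw
      · exact huN
      · rw [hLE, Finset.mem_filter] at hw
        rw [Finset.mem_filter, sub_d1]
        exact ⟨hw.1, hw.2.2⟩
    have : LE.card + 1 ≤ Ncnt K d1 := by
      rw [Ncnt, ← Finset.card_insert_of_notMem huLE]
      exact Finset.card_le_card hins
    omega

lemma exists_rep (p q : ℕ) (D : Finset Pt) (hD : ↑D ⊆ LF p q) :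
    ∃ K : Finset (ℤ × ℤ), (∀ v ∈ K, 0 ≤ v.2) ∧ D = K.image (phi p q) ∧ K.card = D.card := by
  classical
  have hinj := phi_injective p q
  have himg : D = (D.preimage (phi p q) hinj.injOn).image (phi p q) := by
    rw [Finset.image_preimage]
    symm
    apply Finset.filter_true_of_mem
    intro x hx
    obtain ⟨w, _, hweq⟩ := (mem_LF_iff p q _).1 (hD hx)
    exact ⟨w, hweq.symm⟩
  refine ⟨D.preimage (phi p q) hinj.injOn, ?_, himg, ?_⟩
  · intro v hv
    rw [Finset.mem_preimage] at hv
    obtain ⟨w, hw, hweq⟩ := (mem_LF_iff p q _).1 (hD hv)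
    have : w = v := hinj hweq.symm
    rw [← this]; exact hw
  · conv_rhs => rw [himg]
    exact (Finset.card_image_of_injective _ hinj).symm

lemma wetting_energy (cF cS : ℝ) (p q : ℕ) (hq2 : 2 ≤ q) (Dw : Finset Pt)
    (hDw : ↑Dw ⊆ bLFS p q) :
    Vn cF cS p q Dw = (((-cS) * (Dw.card : ℝ) : ℝ) : EReal) := by
  have hterm : ∀ e ∈ Dw.offDiag, vF cF (dE e.1 e.2) = 0 := by
    rintro ⟨x, y⟩ he
    rw [Finset.mem_offDiag] at he
    obtain ⟨hx, hy, hne⟩ := he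
    obtain ⟨k, hk⟩ := hDw hx
    obtain ⟨k', hk'⟩ := hDw hy
    simp only at hne hk hk'
    have hkk : k ≠ k' := by
      rintro rfl
      exact hne (by rw [hk, hk'])
    have hq2' : (2 : ℝ) ≤ (q : ℝ) := by exact_mod_cast hq2
    have hd : 2 ≤ dE x y := by
      rw [hk, hk', dE]
      simp only
      have h1 : ((k : ℝ) * q - (k' : ℝ) * q) ^ 2 + (eS p q - eS p q) ^ 2
          = (((k - k' : ℤ) : ℝ) * q) ^ 2 := by push_cast; ring
      rw [h1]
      have h2 : (1 : ℝ) ≤ (((k - k' : ℤ) : ℝ)) ^ 2 := by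
        have : (1 : ℤ) ≤ (k - k') ^ 2 := by
          have h5 := Int.one_le_abs (sub_ne_zero.2 hkk)
          nlinarith [sq_abs (k - k'), sq_nonneg (k - k')]
        exact_mod_cast this
      have h4 : (4 : ℝ) ≤ (((k - k' : ℤ) : ℝ) * q) ^ 2 := by
        nlinarith [mul_nonneg (sub_nonneg.2 h2) (sq_nonneg ((q : ℝ))), sq_nonneg ((q:ℝ) - 2)]
      nlinarith [Real.sq_sqrt (by positivity : (0:ℝ) ≤ (((k - k' : ℤ) : ℝ) * q) ^ 2),
        Real.sqrt_nonneg ((((k - k' : ℤ) : ℝ) * q) ^ 2)]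
    rw [vF, if_neg (by linarith), if_neg (by linarith)]
  have hv1 : ∀ x ∈ Dw, v1 cS p q x = -cS := by
    intro x hx
    rw [v1, if_pos (hDw hx)]
  rw [Vn, Finset.sum_congr rfl hterm, Finset.sum_congr rfl hv1, Finset.sum_const,
    Finset.sum_const]
  simp [mul_comm]

def gridK (k : ℕ) : Finset (ℤ × ℤ) :=
  (Finset.range k ×ˢ Finset.range k).image (fun ij => ((ij.1 : ℤ), (ij.2 : ℤ) + 1))

lemma gridK_mem (k : ℕ) (v : ℤ × ℤ) :
    v ∈ gridK k ↔ 0 ≤ v.1 ∧ v.1 < k ∧ 1 ≤ v.2 ∧ v.2 ≤ k := by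
  rw [gridK, Finset.mem_image]
  constructor
  · rintro ⟨⟨i, j⟩, hij, rfl⟩
    rw [Finset.mem_product, Finset.mem_range, Finset.mem_range] at hij
    simp only
    omega
  · rintro ⟨h1, h2, h3, h4⟩
    refine ⟨(v.1.toNat, (v.2 - 1).toNat), ?_, ?_⟩
    · rw [Finset.mem_product, Finset.mem_range, Finset.mem_range]
      omega
    · rw [Prod.ext_iff]
      constructor <;> simp <;> omega

lemma gridK_card (k : ℕ) : (gridK k).card = k * k := by
  rw [gridK, Finset.card_image_of_injOn, Finset.card_product, Finset.card_range]
  intro a _ b _ h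
  rw [Prod.ext_iff] at h ⊢
  obtain ⟨h1, h2⟩ := h
  simp only at h1 h2 ⊢
  omega

lemma gridK_pcnt (k : ℕ) : 6 * (k * k) ≤ Pcnt (gridK k) + 8 * k := by
  have hdec := decomp (gridK k)
  rw [gridK_card] at hdec
  have hN1 : Ncnt (gridK k) d1 ≤ k := by
    have hsub : (gridK k).filter (fun v => v - d1 ∉ gridK k) ⊆
        (Finset.range k).image (fun j : ℕ => ((0 : ℤ), (j : ℤ) + 1)) := by
      intro v hv
      rw [Finset.mem_filter, gridK_mem, sub_d1] at hv
      obtain ⟨⟨h1, h2, h3, h4⟩, h5⟩ := hv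
      have hv1 : v.1 = 0 := by
        by_contra h
        exact h5 ((gridK_mem k _).2 (by dsimp only; omega))
      have hmem : (v.2 - 1).toNat ∈ Finset.range k := Finset.mem_range.2 (by omega)
      refine Finset.mem_image.2 ⟨(v.2 - 1).toNat, hmem, ?_⟩
      rw [Prod.ext_iff]
      constructor <;> simp <;> omega
    calc Ncnt (gridK k) d1 ≤ ((Finset.range k).image fun j : ℕ => ((0:ℤ), (j:ℤ)+1)).card :=
          Finset.card_le_card hsub
      _ ≤ (Finset.range k).card := Finset.card_image_le
      _ = k := Finset.card_range k
  have hN2 : Ncnt (gridK k) d2 ≤ k := by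
    have hsub : (gridK k).filter (fun v => v - d2 ∉ gridK k) ⊆
        (Finset.range k).image (fun i : ℕ => ((i : ℤ), (1 : ℤ))) := by
      intro v hv
      rw [Finset.mem_filter, gridK_mem, sub_d2] at hv
      obtain ⟨⟨h1, h2, h3, h4⟩, h5⟩ := hv
      have hv2 : v.2 = 1 := by
        by_contra h
        exact h5 ((gridK_mem k _).2 (by dsimp only; omega))
      have hmem : v.1.toNat ∈ Finset.range k := Finset.mem_range.2 (by omega)
      refine Finset.mem_image.2 ⟨v.1.toNat, hmem, ?_⟩
      rw [Prod.ext_iff]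
      constructor <;> simp <;> omega
    calc Ncnt (gridK k) d2 ≤ _ := Finset.card_le_card hsub
      _ ≤ (Finset.range k).card := Finset.card_image_le
      _ = k := Finset.card_range k
  have hN3 : Ncnt (gridK k) d3 ≤ 2 * k := by
    have hsub : (gridK k).filter (fun v => v - d3 ∉ gridK k) ⊆
        ((Finset.range k).image (fun i : ℕ => ((i : ℤ), (1 : ℤ)))) ∪
        ((Finset.range k).image (fun j : ℕ => ((k : ℤ) - 1, (j : ℤ) + 1))) := by
      intro v hv
      rw [Finset.mem_filter, gridK_mem, sub_d3] at hv
      obtain ⟨⟨h1, h2, h3, h4⟩, h5⟩ := hv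
      have hcase : v.2 = 1 ∨ v.1 = (k : ℤ) - 1 := by
        by_contra h
        push_neg at h
        exact h5 ((gridK_mem k _).2 (by dsimp only; omega))
      rcases hcase with h | h
      · apply Finset.mem_union_left
        have hmem : v.1.toNat ∈ Finset.range k := Finset.mem_range.2 (by omega)
        refine Finset.mem_image.2 ⟨v.1.toNat, hmem, ?_⟩
        rw [Prod.ext_iff]
        constructor <;> simp <;> omega
      · apply Finset.mem_union_right
        have hmem : (v.2 - 1).toNat ∈ Finset.range k := Finset.mem_range.2 (by omega)
        refine Finset.mem_image.2 ⟨(v.2 - 1).toNat, hmem, ?_⟩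
        rw [Prod.ext_iff]
        constructor <;> simp <;> omega
    have hc1 : ((Finset.range k).image (fun i : ℕ => ((i : ℤ), (1 : ℤ)))).card ≤ k :=
      le_trans Finset.card_image_le (le_of_eq (Finset.card_range k))
    have hc2 : ((Finset.range k).image (fun j : ℕ => ((k : ℤ) - 1, (j : ℤ) + 1))).card ≤ k :=
      le_trans Finset.card_image_le (le_of_eq (Finset.card_range k))
    calc Ncnt (gridK k) d3 ≤ _ := Finset.card_le_card hsub
      _ ≤ _ := Finset.card_union_le _ _
      _ ≤ 2 * k := by omega
  omega

lemma gridK_mcnt (q k : ℕ) : mcnt q (gridK k) = 0 := by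
  rw [mcnt, Finset.card_eq_zero, Finset.filter_eq_empty_iff]
  intro v hv
  rw [gridK_mem] at hv
  rintro ⟨h, _⟩
  omega

end WetDev

open WetDev

/-- for `q ≠ 1`, wetting configurations are the (strict, among
configurations leaving `∂L_{FS}`) minimizers for every `n` iff `c_S ≥ 6 c_F`. -/
theorem wetting_regime_q_ne_one
    (cF cS : ℝ) (hcF : 0 < cF) (hcS : 0 < cS)
    (p q : ℕ) (hp : 0 < p) (hq : 0 < q) (hpq : Nat.Coprime p q) (hq1 : q ≠ 1) :
    6 * cF ≤ cS ↔
      ∀ n : ℕ, ∀ Dw : Finset Pt, ↑Dw ⊆ bLFS p q → Dw.card = n →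
        ((∀ D ∈ Cn p q n, Vn cF cS p q Dw ≤ Vn cF cS p q D) ∧
          (∀ D ∈ Cn p q n, (∃ x ∈ D, x ∉ bLFS p q) →
            Vn cF cS p q Dw < Vn cF cS p q D)) := by
  have hq2 : 2 ≤ q := by omega
  constructor
  · intro hcs n Dw hDwsub hDwcard
    have hVw : Vn cF cS p q Dw = (((-cS) * (n : ℝ) : ℝ) : EReal) := by
      rw [wetting_energy cF cS p q hq2 Dw hDwsub, hDwcard]
    constructor
    · rintro D ⟨hDsub, hDcard⟩
      obtain ⟨K, hK2, hKimg, hKcard⟩ := exists_rep p q D hDsub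
      have hE : Vn cF cS p q D =
          (((-cF) * (Pcnt K) + (-cS) * (mcnt q K) : ℝ) : EReal) := by
        rw [hKimg]; exact energy_formula cF cS p q hq K
      have hkey := (key q hq2 K hK2).1
      have hdec := decomp K
      have hmn : mcnt q K ≤ K.card := Finset.card_filter_le _ _
      have hn : K.card = n := by rw [hKcard, hDcard]
      rw [hVw, hE, EReal.coe_le_coe_iff]
      have h2 : Pcnt K + 6 * mcnt q K ≤ 6 * n := by omega
      have h2r : (Pcnt K : ℝ) + 6 * (mcnt q K : ℝ) ≤ 6 * (n : ℝ) := by exact_mod_cast h2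
      have hmr : (mcnt q K : ℝ) ≤ (n : ℝ) := by
        have : mcnt q K ≤ n := by omega
        exact_mod_cast this
      have e1 : cF * (Pcnt K : ℝ) ≤ cF * (6 * (n : ℝ) - 6 * (mcnt q K : ℝ)) :=
        mul_le_mul_of_nonneg_left (by linarith) hcF.le
      have e2 : 0 ≤ (cS - 6 * cF) * ((n : ℝ) - (mcnt q K : ℝ)) :=
        mul_nonneg (by linarith) (by linarith)
      nlinarith
    · rintro D ⟨hDsub, hDcard⟩ ⟨x, hxD, hxb⟩
      obtain ⟨K, hK2, hKimg, hKcard⟩ := exists_rep p q D hDsub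
      have hE : Vn cF cS p q D =
          (((-cF) * (Pcnt K) + (-cS) * (mcnt q K) : ℝ) : EReal) := by
        rw [hKimg]; exact energy_formula cF cS p q hq K
      obtain ⟨v, hvK, hvx⟩ := Finset.mem_image.1 (hKimg ▸ hxD)
      have hvnot : ¬(v.2 = 0 ∧ (q : ℤ) ∣ v.1) := by
        intro hc
        exact hxb (hvx ▸ (mem_bLFS_phi p q hq v).2 hc)
      have hkey := (key q hq2 K hK2).2 ⟨v, hvK, hvnot⟩
      have hdec := decomp K
      have hmn : mcnt q K ≤ K.card := Finset.card_filter_le _ _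
      have hn : K.card = n := by rw [hKcard, hDcard]
      rw [hVw, hE, EReal.coe_lt_coe_iff]
      have h2 : Pcnt K + 6 * mcnt q K + 2 ≤ 6 * n := by omega
      have h2r : (Pcnt K : ℝ) + 6 * (mcnt q K : ℝ) + 2 ≤ 6 * (n : ℝ) := by exact_mod_cast h2
      have hmr : (mcnt q K : ℝ) ≤ (n : ℝ) := by
        have : mcnt q K ≤ n := by omega
        exact_mod_cast this
      have e1 : cF * (Pcnt K : ℝ) ≤ cF * (6 * (n : ℝ) - 6 * (mcnt q K : ℝ) - 2) :=
        mul_le_mul_of_nonneg_left (by linarith) hcF.le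
      have e2 : 0 ≤ (cS - 6 * cF) * ((n : ℝ) - (mcnt q K : ℝ)) :=
        mul_nonneg (by linarith) (by linarith)
      nlinarith
  · intro H
    by_contra hcs
    push_neg at hcs
    have hε0 : 0 < 6 * cF - cS := by linarith
    obtain ⟨k, hk1, hk8⟩ : ∃ k : ℕ, 1 ≤ k ∧ 8 * cF ≤ (6 * cF - cS) * (k : ℝ) := by
      refine ⟨max 1 ⌈(8 * cF) / (6 * cF - cS)⌉₊, le_max_left _ _, ?_⟩
      have h1 : (8 * cF) / (6 * cF - cS) ≤ (⌈(8 * cF) / (6 * cF - cS)⌉₊ : ℝ) := Nat.le_ceil _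
      have h2 : ((⌈(8 * cF) / (6 * cF - cS)⌉₊ : ℕ) : ℝ) ≤
          ((max 1 ⌈(8 * cF) / (6 * cF - cS)⌉₊ : ℕ) : ℝ) := by
        exact_mod_cast le_max_right 1 ⌈(8 * cF) / (6 * cF - cS)⌉₊
      have h3 : (8 * cF) / (6 * cF - cS) ≤ ((max 1 ⌈(8 * cF) / (6 * cF - cS)⌉₊ : ℕ) : ℝ) :=
        le_trans h1 h2
      calc 8 * cF = ((8 * cF) / (6 * cF - cS)) * (6 * cF - cS) := by rw [div_mul_cancel₀ _ hε0.ne']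
        _ ≤ ((max 1 ⌈(8 * cF) / (6 * cF - cS)⌉₊ : ℕ) : ℝ) * (6 * cF - cS) :=
            mul_le_mul_of_nonneg_right h3 hε0.le
        _ = (6 * cF - cS) * ((max 1 ⌈(8 * cF) / (6 * cF - cS)⌉₊ : ℕ) : ℝ) := by ring
    set n := k * k with hn
    set Dw := (Finset.range n).image (fun i : ℕ => (((i : ℝ) * (q : ℝ), eS p q) : Pt)) with hDw
    have hqR : (0 : ℝ) < (q : ℝ) := by exact_mod_cast hq
    have hDwsub : ↑Dw ⊆ bLFS p q := by
      intro x hx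
      simp only [hDw, Finset.coe_image, Set.mem_image, Finset.mem_coe] at hx
      obtain ⟨i, _, rfl⟩ := hx
      exact ⟨(i : ℤ), by push_cast; rfl⟩
    have hDwcard : Dw.card = n := by
      rw [hDw, Finset.card_image_of_injOn, Finset.card_range]
      intro a _ b _ hab
      rw [Prod.ext_iff] at hab
      have h1 : (a : ℝ) * q = (b : ℝ) * q := hab.1
      have : (a : ℝ) = b := mul_right_cancel₀ hqR.ne' h1
      exact_mod_cast this
    obtain ⟨-, hstrict⟩ := H n Dw hDwsub hDwcard
    have hDC : (gridK k).image (phi p q) ∈ Cn p q n := by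
      constructor
      · intro x hx
        simp only [Finset.coe_image, Set.mem_image, Finset.mem_coe] at hx
        obtain ⟨v, hv, rfl⟩ := hx
        exact phi_mem_LF p q v (by have := (gridK_mem k v).1 hv; omega)
      · rw [Finset.card_image_of_injective _ (phi_injective p q), gridK_card]
    have hwit : ∃ x ∈ (gridK k).image (phi p q), x ∉ bLFS p q := by
      refine ⟨phi p q (0, 1), Finset.mem_image_of_mem _ ((gridK_mem k (0, 1)).2 ?_), ?_⟩
      · refine ⟨le_refl _, ?_, le_refl _, ?_⟩ <;> · simp only; exact_mod_cast hk1
      · intro hc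
        have := ((mem_bLFS_phi p q hq (0, 1)).1 hc).1
        simp at this
    have hlt := hstrict _ hDC hwit
    rw [wetting_energy cF cS p q hq2 Dw hDwsub, hDwcard,
      energy_formula cF cS p q hq (gridK k), gridK_mcnt, EReal.coe_lt_coe_iff] at hlt
    have hP := gridK_pcnt k
    have hPr : 6 * ((k : ℝ) * (k : ℝ)) ≤ (Pcnt (gridK k) : ℝ) + 8 * (k : ℝ) := by
      exact_mod_cast hP
    have hk1r : (1 : ℝ) ≤ (k : ℝ) := by exact_mod_cast hk1
    have hnr : ((n : ℕ) : ℝ) = (k : ℝ) * (k : ℝ) := by rw [hn]; push_cast; ring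
    rw [hnr] at hlt
    simp only [Nat.cast_zero, mul_zero, add_zero] at hlt
    -- hlt : -cS * (k*k) < -cF * Pcnt
    have e1 : cF * (6 * ((k : ℝ) * k) - 8 * k) ≤ cF * (Pcnt (gridK k) : ℝ) :=
      mul_le_mul_of_nonneg_left (by linarith) hcF.le
    have e2 : 8 * cF * (k : ℝ) ≤ (6 * cF - cS) * ((k : ℝ) * k) := by
      have := mul_le_mul_of_nonneg_right hk8 (by linarith : (0 : ℝ) ≤ (k : ℝ))
      nlinarith
    nlinarith
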